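/- Let (X, Y) be a complete hereditary cotorsion pair in an abelian category A. For any finite family M_1, …, M_n of objects, X-resdim(M_1 ⊕ ⋯ ⊕ M_n) = sup{ X-resdim(M_i) : i = 1, …, n }. Consequently, the class of objects of finite X-resolution dimension is thick (closed under direct summands, extensions, kernels of epimorphisms, and cokernels of monomorphisms). -/
import Mathlib


open CategoryTheory Limits

universe w v u

namespace PaperAB

variable {C : Type u} [Category.{v} C] [Abelian C] [HasExt.{w} C]

/-- Vanishing of `Ext^n(A, B)`. -/
def extZero (A B : C) (n : ℕ) : Prop := Subsingleton (Abelian.Ext A B n)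

/-- The right `Ext^1`-orthogonal class of a class `𝒳`. -/
def rightOrth (𝒳 : C → Prop) : C → Prop := fun B => ∀ A, 𝒳 A → extZero A B 1

/-- The left `Ext^1`-orthogonal class of a class `𝒴`. -/
def leftOrth (𝒴 : C → Prop) : C → Prop := fun A => ∀ B, 𝒴 B → extZero A B 1

/-- `f, g` form a short exact sequence `0 → A → B → D → 0`. -/
def IsSES {A B D : C} (f : A ⟶ B) (g : B ⟶ D) : Prop :=
  ∃ (zero : f ≫ g = 0), (ShortComplex.mk f g zero).ShortExact

/-- `(𝒳, 𝒴)` is a cotorsion pair. -/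
structure CotorsionPair (𝒳 𝒴 : C → Prop) : Prop where
  eqLeft : ∀ A, 𝒳 A ↔ leftOrth 𝒴 A
  eqRight : ∀ B, 𝒴 B ↔ rightOrth 𝒳 B

/-- Completeness of a pair of classes `(𝒳, 𝒴)`: every object admits a special
`𝒳`-precover and a special `𝒴`-preenvelope. -/
def Complete (𝒳 𝒴 : C → Prop) : Prop :=
  ∀ A : C,
    (∃ (Y X : C) (f : Y ⟶ X) (g : X ⟶ A), IsSES f g ∧ 𝒳 X ∧ 𝒴 Y) ∧
    (∃ (Y X : C) (f : A ⟶ Y) (g : Y ⟶ X), IsSES f g ∧ 𝒴 Y ∧ 𝒳 X)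

/-- Heredity: `Ext^n(𝒳, 𝒴) = 0` for all `n ≥ 1`. -/
def Hereditary (𝒳 𝒴 : C → Prop) : Prop :=
  ∀ A B, 𝒳 A → 𝒴 B → ∀ n, 1 ≤ n → extZero A B n

/-- Complete hereditary cotorsion pair. -/
structure CHCP (𝒳 𝒴 : C → Prop) : Prop where
  cotorsion : CotorsionPair 𝒳 𝒴
  complete : Complete 𝒳 𝒴
  hereditary : Hereditary 𝒳 𝒴

/-- `ResDimLE 𝒳 A n` : there exists an exact sequence
`0 → X n → ⋯ → X 0 → A → 0` with all `X i ∈ 𝒳`. -/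
def ResDimLE (𝒳 : C → Prop) (A : C) (n : ℕ) : Prop :=
  ∃ (X : ℕ → C) (d : ∀ i, X (i + 1) ⟶ X i) (ε : X 0 ⟶ A),
    (∀ i, i ≤ n → 𝒳 (X i)) ∧ (∀ i, n < i → IsZero (X i)) ∧ Epi ε ∧
    (∃ (zero : d 0 ≫ ε = 0), (ShortComplex.mk (d 0) ε zero).Exact) ∧
    (∀ i, ∃ (zero : d (i + 1) ≫ d i = 0),
      (ShortComplex.mk (d (i + 1)) (d i) zero).Exact)

/-- Objects of finite `𝒳`-resolution dimension (the class `X̂`). -/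
def FinResDim (𝒳 : C → Prop) (A : C) : Prop := ∃ n, ResDimLE 𝒳 A n

/-- The `𝒳`-resolution dimension of `A`, in `ℕ∞`. -/
noncomputable def ResDim (𝒳 : C → Prop) (A : C) : ℕ∞ :=
  sInf {m : ℕ∞ | ∃ n : ℕ, m = (n : ℕ∞) ∧ ResDimLE 𝒳 A n}

/-- The intersection of two classes. -/
def Inter (𝒳 𝒴 : C → Prop) : C → Prop := fun A => 𝒳 A ∧ 𝒴 A

def ClosedUnderExtensions (𝒲 : C → Prop) : Prop :=
  ∀ ⦃A B D : C⦄ (f : A ⟶ B) (g : B ⟶ D), IsSES f g → 𝒲 A → 𝒲 D → 𝒲 B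

def ClosedUnderKernels (𝒲 : C → Prop) : Prop :=
  ∀ ⦃A B D : C⦄ (f : A ⟶ B) (g : B ⟶ D), IsSES f g → 𝒲 B → 𝒲 D → 𝒲 A

def ClosedUnderCokernels (𝒲 : C → Prop) : Prop :=
  ∀ ⦃A B D : C⦄ (f : A ⟶ B) (g : B ⟶ D), IsSES f g → 𝒲 A → 𝒲 B → 𝒲 D

def ClosedUnderSummands (𝒲 : C → Prop) : Prop :=
  ∀ ⦃A B : C⦄ (i : A ⟶ B) (p : B ⟶ A), i ≫ p = 𝟙 A → 𝒲 B → 𝒲 A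

/-- A class is thick if it is closed under direct summands and has the
two-out-of-three property on short exact sequences. -/
def IsThick (𝒲 : C → Prop) : Prop :=
  ClosedUnderSummands 𝒲 ∧ ClosedUnderExtensions 𝒲 ∧
    ClosedUnderKernels 𝒲 ∧ ClosedUnderCokernels 𝒲

/-- A class is left thick if it is closed under direct summands, extensions and
kernels of epimorphisms. -/
def LeftThick (𝒲 : C → Prop) : Prop :=
  ClosedUnderSummands 𝒲 ∧ ClosedUnderExtensions 𝒲 ∧ ClosedUnderKernels 𝒲

/-- A class is right thick if it is closed under direct summands, extensions and
cokernels of monomorphisms. -/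
def RightThick (𝒲 : C → Prop) : Prop :=
  ClosedUnderSummands 𝒲 ∧ ClosedUnderExtensions 𝒲 ∧ ClosedUnderCokernels 𝒲

/-- `ω` is a cogenerator for `𝒳`. -/
def IsCogeneratorFor (ω 𝒳 : C → Prop) : Prop :=
  (∀ A, ω A → 𝒳 A) ∧
  ∀ A, 𝒳 A → ∃ (W A' : C) (f : A ⟶ W) (g : W ⟶ A'), IsSES f g ∧ ω W ∧ 𝒳 A'

/-- `ω` is an injective cogenerator for `𝒳`. -/
def IsInjCogeneratorFor (ω 𝒳 : C → Prop) : Prop :=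
  IsCogeneratorFor ω 𝒳 ∧ ∀ A W, 𝒳 A → ω W → ∀ n, 1 ≤ n → extZero A W n

/-- A left weak Auslander–Buchweitz context `(𝒳, 𝒴, ω)`. -/
structure LeftWeakABContext (𝒳 𝒴 ω : C → Prop) : Prop where
  ab1 : LeftThick 𝒳
  ab2 : RightThick 𝒴
  ab2' : ∀ A, 𝒴 A → FinResDim 𝒳 A
  ab3 : (∀ A, ω A ↔ 𝒳 A ∧ 𝒴 A) ∧ IsInjCogeneratorFor ω 𝒳

/-- A left Auslander–Buchweitz context: a left weak AB-context in which every
object has finite `𝒳`-resolution dimension. -/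
structure LeftABContext (𝒳 𝒴 ω : C → Prop) extends LeftWeakABContext 𝒳 𝒴 ω : Prop where
  hat_all : ∀ A : C, FinResDim 𝒳 A

end PaperAB

namespace PaperAB

open Abelian ZeroObject

variable {C : Type u} [Category.{v} C] [Abelian C] [HasExt.{w} C]

lemma extZero_eq_zero {A B : C} {n : ℕ} (h : extZero A B n) (x : Ext A B n) : x = 0 :=
  @Subsingleton.elim _ h x 0

lemma extZero_of {A B : C} {n : ℕ} (h : ∀ x : Ext A B n, x = 0) : extZero A B n :=
  subsingleton_of_forall_eq 0 h

lemma les₂ {S : ShortComplex C} (hS : S.ShortExact) (W : C) (n : ℕ)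
    (h1 : extZero S.X₁ W n) (h3 : extZero S.X₃ W n) : extZero S.X₂ W n := by
  refine extZero_of fun x => ?_
  obtain ⟨y, hy⟩ := Ext.contravariant_sequence_exact₂ hS W x (extZero_eq_zero h1 _)
  rw [← hy, extZero_eq_zero h3 y, Ext.comp_zero]

lemma les₁ {S : ShortComplex C} (hS : S.ShortExact) (W : C) (n₀ n₁ : ℕ) (h : 1 + n₀ = n₁)
    (h2 : extZero S.X₂ W n₀) (h3 : extZero S.X₃ W n₁) : extZero S.X₁ W n₀ := by
  refine extZero_of fun x => ?_
  obtain ⟨y, hy⟩ := Ext.contravariant_sequence_exact₁ hS W x h (extZero_eq_zero h3 _)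
  rw [← hy, extZero_eq_zero h2 y, Ext.comp_zero]

lemma les₃ {S : ShortComplex C} (hS : S.ShortExact) (W : C) (n₀ n₁ : ℕ) (h : 1 + n₀ = n₁)
    (h1 : extZero S.X₁ W n₀) (h2 : extZero S.X₂ W n₁) : extZero S.X₃ W n₁ := by
  refine extZero_of fun x => ?_
  obtain ⟨y, hy⟩ := Ext.contravariant_sequence_exact₃ hS W x (extZero_eq_zero h2 _) h
  rw [← hy, extZero_eq_zero h1 y, Ext.comp_zero]

lemma extZero_of_retract {A B W : C} (i : A ⟶ B) (p : B ⟶ A) (hip : i ≫ p = 𝟙 A) (n : ℕ)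
    (h : extZero B W n) : extZero A W n := by
  refine extZero_of fun x => ?_
  have hx : x = (Ext.mk₀ (i ≫ p)).comp x (zero_add n) := by rw [hip, Ext.mk₀_id_comp]
  rw [hx, ← Ext.mk₀_comp_mk₀_assoc, extZero_eq_zero h ((Ext.mk₀ p).comp x (zero_add n)),
    Ext.comp_zero]

lemma mk0_add {X Y : C} (f g : X ⟶ Y) :
    Ext.mk₀ (f + g) = Ext.mk₀ f + Ext.mk₀ g := by
  letI := HasDerivedCategory.standard C
  apply Ext.ext
  simp [ShiftedHom.mk₀, Functor.map_add]

noncomputable def mk0Hom (X Y : C) : (X ⟶ Y) →+ Ext X Y 0 :=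
  AddMonoidHom.mk' Ext.mk₀ mk0_add

lemma extZero_biproduct {k : ℕ} (M : Fin k → C) [HasBiproduct M] (W : C) (n : ℕ)
    (h : ∀ i, extZero (M i) W n) : extZero (⨁ M) W n := by
  refine extZero_of fun x => ?_
  have h1 : x = (Ext.mk₀ (𝟙 (⨁ M))).comp x (zero_add n) := (Ext.mk₀_id_comp x).symm
  rw [h1, ← biproduct.total]
  have h2 : Ext.mk₀ (∑ i : Fin k, biproduct.π M i ≫ biproduct.ι M i) =
      ∑ i : Fin k, Ext.mk₀ (biproduct.π M i ≫ biproduct.ι M i) := by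
    rw [show (Ext.mk₀ : ((⨁ M) ⟶ (⨁ M)) → _) = mk0Hom _ _ from rfl, map_sum]
  rw [h2]
  have h3 : (∑ i : Fin k, Ext.mk₀ (biproduct.π M i ≫ biproduct.ι M i)).comp x (zero_add n) =
      Ext.postcomp x (⨁ M) (zero_add n)
        (∑ i : Fin k, Ext.mk₀ (biproduct.π M i ≫ biproduct.ι M i)) := rfl
  rw [h3, map_sum]
  refine Finset.sum_eq_zero fun i _ => ?_
  show (Ext.mk₀ (biproduct.π M i ≫ biproduct.ι M i)).comp x (zero_add n) = 0
  rw [← Ext.mk₀_comp_mk₀_assoc,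
    extZero_eq_zero (h i) ((Ext.mk₀ (biproduct.ι M i)).comp x (zero_add n)), Ext.comp_zero]

/-- Vanishing of `Ext^m(A, -)` on `𝒴` for all `m > n`. -/
def Van (𝒴 : C → Prop) (A : C) (n : ℕ) : Prop := ∀ B, 𝒴 B → ∀ m, n < m → extZero A B m

theorem resDimLE_iff_van {𝒳 𝒴 : C → Prop} (h : CHCP 𝒳 𝒴) (n : ℕ) (A : C) :
    ResDimLE 𝒳 A n ↔ Van 𝒴 A n := by
  induction n generalizing A with
  | zero =>
    constructor
    · rintro ⟨X, d, ε, hX, hz, hepi, ⟨z0, ex0⟩, hexi⟩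
      have hd0 : d 0 = 0 := (hz 1 one_pos).eq_of_src _ _
      have hmono : Mono ε := by
        have := (ShortComplex.exact_iff_mono (ShortComplex.mk (d 0) ε z0) hd0).mp ex0
        exact this
      have : IsIso ε := isIso_of_mono_of_epi ε
      intro B hB m hm
      exact extZero_of_retract (inv ε) ε (by simp) m
        (h.hereditary (X 0) B (hX 0 le_rfl) hB m hm)
    · intro hv
      have hA : 𝒳 A := (h.cotorsion.eqLeft A).mpr (fun B hB => hv B hB 1 one_pos)
      refine ⟨fun i => Nat.rec A (fun _ _ => (0 : C)) i,
        fun i => 0, 𝟙 A, ?_, ?_, inferInstance, ⟨by simp, ?_⟩, ?_⟩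
      · intro i hi
        obtain rfl := Nat.le_zero.mp hi
        exact hA
      · intro i hi
        obtain ⟨j, rfl⟩ : ∃ j, i = j + 1 := ⟨i - 1, by omega⟩
        exact isZero_zero C
      · exact (ShortComplex.exact_iff_mono _ rfl).mpr inferInstance
      · intro i
        exact ⟨by simp, ShortComplex.exact_of_isZero_X₂ _ (isZero_zero C)⟩
  | succ n ih =>
    constructor
    · rintro ⟨X, d, ε, hX, hz, hepi, ⟨z0, ex0⟩, hexi⟩
      -- the syzygy
      set K := kernel ε with hK
      have hses : (ShortComplex.mk (kernel.ι ε) ε (kernel.condition ε)).ShortExact := by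
        refine ⟨?_⟩
        rw [ShortComplex.exact_iff_exact_up_to_refinements]
        intro T x₂ hx₂
        exact ⟨T, 𝟙 T, inferInstance, kernel.lift ε x₂ hx₂, by simp⟩
      set ε' := kernel.lift ε (d 0) z0 with hε'
      have hε'ι : ε' ≫ kernel.ι ε = d 0 := kernel.lift_ι _ _ _
      have hepi' : Epi ε' := by
        rw [epi_iff_surjective_up_to_refinements]
        intro T y
        obtain ⟨T', π, hπ, x₁, fac⟩ := ex0.exact_up_to_refinements (y ≫ kernel.ι ε)
          (by rw [Category.assoc, kernel.condition, comp_zero])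
        refine ⟨T', π, hπ, x₁, ?_⟩
        rw [← cancel_mono (kernel.ι ε), Category.assoc, Category.assoc, hε'ι]
        simpa using fac
      have hresK : ResDimLE 𝒳 K n := by
        obtain ⟨z1, ex1⟩ := hexi 0
        refine ⟨fun i => X (i + 1), fun i => d (i + 1), ε', ?_, ?_, hepi', ⟨?_, ?_⟩, ?_⟩
        · intro i hi; exact hX (i + 1) (by omega)
        · intro i hi; exact hz (i + 1) (by omega)
        · rw [← cancel_mono (kernel.ι ε), Category.assoc, hε'ι, zero_comp]; exact z1
        · rw [ShortComplex.exact_iff_exact_up_to_refinements]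
          intro T x₂ hx₂
          have hx₂' : x₂ ≫ ε' = 0 := hx₂
          have h0 : x₂ ≫ d 0 = 0 := by
            have h1 := congrArg (fun t => t ≫ kernel.ι ε) hx₂'
            simpa only [Category.assoc, hε'ι, zero_comp, comp_zero] using h1
          exact ex1.exact_up_to_refinements x₂ h0
        · intro i; exact hexi (i + 1)
      have hvK : Van 𝒴 K n := (ih K).mp hresK
      intro B hB m hm
      obtain ⟨m', rfl⟩ : ∃ m', m = 1 + m' := ⟨m - 1, by omega⟩
      exact les₃ hses B m' (1 + m') rfl (hvK B hB m' (by omega))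
        (h.hereditary (X 0) B (hX 0 (by omega)) hB (1 + m') (by omega))
    · intro hv
      obtain ⟨Y', X0, f, g, ⟨zfg, hse⟩, hX0, hY'⟩ := (h.complete A).1
      have hvY : Van 𝒴 Y' n := by
        intro B hB m hm
        exact les₁ hse B m (1 + m) rfl
          (h.hereditary X0 B hX0 hB m (by omega)) (hv B hB (1 + m) (by omega))
      obtain ⟨X', d', ε', hX', hz', hepi', ⟨z0', ex0'⟩, hexi'⟩ := (ih Y').mpr hvY
      refine ⟨fun i => Nat.rec X0 (fun j _ => X' j) i,
        fun i => Nat.rec (motive := fun i =>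
            (Nat.rec X0 (fun j _ => X' j) (i + 1) : C) ⟶ Nat.rec X0 (fun j _ => X' j) i)
          (ε' ≫ f) (fun j _ => d' j) i, g, ?_, ?_, hse.epi_g, ⟨?_, ?_⟩, ?_⟩
      · rintro (_ | j) hi
        · exact hX0
        · exact hX' j (by omega)
      · rintro (_ | j) hi
        · omega
        · exact hz' j (by omega)
      · show (ε' ≫ f) ≫ g = 0
        rw [Category.assoc, zfg, comp_zero]
      · have hplain : (ShortComplex.mk (ε' ≫ f) g
            (by rw [Category.assoc, zfg, comp_zero])).Exact := by
          rw [ShortComplex.exact_iff_exact_up_to_refinements]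
          dsimp only
          intro T x₂ hx₂
          have hx₂' : x₂ ≫ g = 0 := hx₂
          obtain ⟨T₁, π₁, hπ₁, y, hy⟩ := hse.exact.exact_up_to_refinements x₂ hx₂'
          have hy' : π₁ ≫ x₂ = y ≫ f := hy
          obtain ⟨T₂, π₂, hπ₂, z, hz₂⟩ := surjective_up_to_refinements_of_epi ε' y
          refine ⟨T₂, π₂ ≫ π₁, epi_comp _ _, z, ?_⟩
          show (π₂ ≫ π₁) ≫ x₂ = z ≫ (ε' ≫ f)
          rw [Category.assoc, hy', ← Category.assoc, hz₂, Category.assoc]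
        exact hplain
      · rintro (_ | j)
        · refine ⟨?_, ?_⟩
          · show d' 0 ≫ ε' ≫ f = 0
            rw [← Category.assoc, z0', zero_comp]
          · have hplain : (ShortComplex.mk (d' 0) (ε' ≫ f)
                (by rw [← Category.assoc, z0', zero_comp])).Exact := by
              rw [ShortComplex.exact_iff_exact_up_to_refinements]
              dsimp only
              intro T x₂ hx₂
              have hx₂' : x₂ ≫ (ε' ≫ f) = 0 := hx₂
              have hmf := hse.mono_f
              have h0 : x₂ ≫ ε' = 0 := by
                have h1 : (x₂ ≫ ε') ≫ f = 0 ≫ f := by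
                  rw [Category.assoc, zero_comp]
                  exact hx₂'
                exact (cancel_mono f).mp h1
              exact ex0'.exact_up_to_refinements x₂ h0
            exact hplain
        · exact hexi' j


lemma van_mono {𝒴 : C → Prop} {A : C} {n n' : ℕ} (hnn : n ≤ n') (hv : Van 𝒴 A n) :
    Van 𝒴 A n' :=
  fun B hB m hm => hv B hB m (by omega)

lemma resDim_le_iff {𝒳 𝒴 : C → Prop} (h : CHCP 𝒳 𝒴) (A : C) (n : ℕ) :
    ResDim 𝒳 A ≤ (n : ℕ∞) ↔ Van 𝒴 A n := by
  constructor
  · intro hle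
    by_contra hc
    have hlow : ∀ m ∈ {m : ℕ∞ | ∃ n' : ℕ, m = (n' : ℕ∞) ∧ ResDimLE 𝒳 A n'},
        (((n + 1 : ℕ)) : ℕ∞) ≤ m := by
      rintro m ⟨n', rfl, hr⟩
      have hv := (resDimLE_iff_van h n' A).mp hr
      by_contra hlt
      push_neg at hlt
      have hlt' : n' < n + 1 := by exact_mod_cast hlt
      exact hc (van_mono (by omega) hv)
    have h2 : (((n + 1 : ℕ)) : ℕ∞) ≤ ResDim 𝒳 A := le_sInf hlow
    have h3 := h2.trans hle
    have : n + 1 ≤ n := by exact_mod_cast h3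
    omega
  · intro hv
    exact sInf_le ⟨n, rfl, (resDimLE_iff_van h n A).mpr hv⟩


/-- For a complete hereditary cotorsion pair `(𝒳, 𝒴)`, the
`𝒳`-resolution dimension of a finite direct sum is the supremum of the
`𝒳`-resolution dimensions; consequently the class of objects of finite
`𝒳`-resolution dimension is thick. -/
theorem statement3 {C : Type u} [Category.{v} C] [Abelian C] [HasExt.{w} C]
    {𝒳 𝒴 : C → Prop} (h : CHCP 𝒳 𝒴) (k : ℕ) (M : Fin k → C)
    [HasBiproduct M] :
    (ResDim 𝒳 (⨁ M) = ⨆ i, ResDim 𝒳 (M i)) ∧ IsThick (FinResDim 𝒳) := by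

  constructor
  · apply le_antisymm
    · by_cases htop : (⨆ i, ResDim 𝒳 (M i)) = ⊤
      · rw [htop]; exact le_top
      · obtain ⟨n, hn⟩ : ∃ n : ℕ, (⨆ i, ResDim 𝒳 (M i)) = (n : ℕ∞) := by
          obtain ⟨n, hn⟩ := WithTop.ne_top_iff_exists.mp htop
          exact ⟨n, hn.symm⟩
        rw [hn, resDim_le_iff h]
        intro B hB m hm
        refine extZero_biproduct M B m fun i => ?_
        have hle : ResDim 𝒳 (M i) ≤ (n : ℕ∞) :=
          (le_iSup (fun i => ResDim 𝒳 (M i)) i).trans hn.le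
        exact (resDim_le_iff h (M i) n).mp hle B hB m hm
    · refine iSup_le fun i => ?_
      by_cases htop : ResDim 𝒳 (⨁ M) = ⊤
      · rw [htop]; exact le_top
      · obtain ⟨n, hn⟩ : ∃ n : ℕ, ResDim 𝒳 (⨁ M) = (n : ℕ∞) := by
          obtain ⟨n, hn⟩ := WithTop.ne_top_iff_exists.mp htop
          exact ⟨n, hn.symm⟩
        rw [hn, resDim_le_iff h]
        have hv : Van 𝒴 (⨁ M) n := (resDim_le_iff h _ n).mp hn.le
        intro B hB m hm
        exact extZero_of_retract (biproduct.ι M i) (biproduct.π M i)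
          (biproduct.ι_π_self M i) m (hv B hB m hm)
  · have key : ∀ A : C, FinResDim 𝒳 A ↔ ∃ n, Van 𝒴 A n := fun A =>
      ⟨fun ⟨n, hr⟩ => ⟨n, (resDimLE_iff_van h n A).mp hr⟩,
       fun ⟨n, hv⟩ => ⟨n, (resDimLE_iff_van h n A).mpr hv⟩⟩
    refine ⟨?_, ?_, ?_, ?_⟩
    · intro A B i p hip hB
      obtain ⟨n, hv⟩ := (key B).mp hB
      exact (key A).mpr ⟨n, fun B' hB' m hm => extZero_of_retract i p hip m (hv B' hB' m hm)⟩
    · rintro A B D f g ⟨zero, hse⟩ hA hD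
      obtain ⟨n₁, h1⟩ := (key A).mp hA
      obtain ⟨n₃, h3⟩ := (key D).mp hD
      refine (key B).mpr ⟨max n₁ n₃, fun B' hB' m hm => ?_⟩
      exact les₂ hse B' m (h1 B' hB' m (by omega)) (h3 B' hB' m (by omega))
    · rintro A B D f g ⟨zero, hse⟩ hB hD
      obtain ⟨n₂, h2⟩ := (key B).mp hB
      obtain ⟨n₃, h3⟩ := (key D).mp hD
      refine (key A).mpr ⟨max n₂ n₃, fun B' hB' m hm => ?_⟩
      exact les₁ hse B' m (1 + m) rfl (h2 B' hB' m (by omega)) (h3 B' hB' (1 + m) (by omega))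
    · rintro A B D f g ⟨zero, hse⟩ hA hB
      obtain ⟨n₁, h1⟩ := (key A).mp hA
      obtain ⟨n₂, h2⟩ := (key B).mp hB
      refine (key D).mpr ⟨max n₁ n₂ + 1, fun B' hB' m hm => ?_⟩
      obtain ⟨m', rfl⟩ : ∃ m', m = 1 + m' := ⟨m - 1, by omega⟩
      exact les₃ hse B' m' (1 + m') rfl (h1 B' hB' m' (by omega)) (h2 B' hB' (1 + m') (by omega))


end PaperAB
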